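/- Let X be a measurable space, n ∈ ℕ, and F a set of measurable functions X → [0,∞] with F = F°° (polar among s-finite measures on X). Then the following three subsets of the measurable functions on the symmetric power X^{(n)} have the same double polar: ({ eq\h | h ∈ (F^{⊗n})°° and h symmetric })°° = ({ eq\(s_n(g)) | g ∈ (F^{⊗n})°° })°° = ({ eq\(s_n(f_1⊗⋯⊗f_n)) | all f_i ∈ F })°°, where the inner polars (F^{⊗n})°° are taken on Fin n → X and the outer double polars on X^{(n)}, all with respect to s-finite measures. -/

import Mathlib

open MeasureTheory
open scoped ENNReal

/-- The polar of a set of `[0,∞]`-valued functions on `W`: the s-finite measures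
integrating every member to at most `1`. -/
def funPolar {W : Type*} [MeasurableSpace W] (G : Set (W → ℝ≥0∞)) : Set (Measure W) :=
  {μ | SFinite μ ∧ ∀ g ∈ G, ∫⁻ w, g w ∂μ ≤ 1}

/-- The polar of a set of measures on `W`: the measurable `[0,∞]`-valued functions
integrating to at most `1` against every member. -/
def measPolar {W : Type*} [MeasurableSpace W] (M : Set (Measure W)) : Set (W → ℝ≥0∞) :=
  {f | Measurable f ∧ ∀ μ ∈ M, ∫⁻ w, f w ∂μ ≤ 1}

/-- Double polar of a set of functions. -/
def biPolar {W : Type*} [MeasurableSpace W] (G : Set (W → ℝ≥0∞)) : Set (W → ℝ≥0∞) :=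
  measPolar (funPolar G)

/-- `F^{⊗n} = { f₁ ⊗ ⋯ ⊗ fₙ | all fᵢ ∈ F }`, where
`(f₁ ⊗ ⋯ ⊗ fₙ)(x) = ∏ i, fᵢ (x i)` on `Fin n → X`. -/
def tensorPow {X : Type*} (F : Set (X → ℝ≥0∞)) (n : ℕ) : Set ((Fin n → X) → ℝ≥0∞) :=
  {g | ∃ f : Fin n → X → ℝ≥0∞, (∀ i, f i ∈ F) ∧ g = fun x => ∏ i, f i (x i)}

/-- The barycentre `s_n(g)(x) = (n!)⁻¹ Σ_{σ ∈ Perm (Fin n)} g (x ∘ σ)`. -/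
noncomputable def bary {X : Type*} (n : ℕ) (g : (Fin n → X) → ℝ≥0∞) :
    (Fin n → X) → ℝ≥0∞ :=
  fun x => (n.factorial : ℝ≥0∞)⁻¹ * ∑ σ : Equiv.Perm (Fin n), g (x ∘ σ)


/-- The setoid on `Fin n → X` identifying tuples up to permutation of coordinates. -/
def symSetoid (X : Type*) (n : ℕ) : Setoid (Fin n → X) where
  r x y := ∃ σ : Equiv.Perm (Fin n), x ∘ σ = y
  iseqv := by
    refine ⟨fun x => ⟨1, ?_⟩, ?_, ?_⟩
    · funext i; simp
    · rintro x y ⟨σ, rfl⟩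
      exact ⟨σ⁻¹, by funext i; simp⟩
    · rintro x y z ⟨σ, rfl⟩ ⟨τ, rfl⟩
      exact ⟨σ * τ, by funext i; simp [Equiv.Perm.mul_apply]⟩

/-- The symmetric power `X^{(n)}`: the quotient of `Fin n → X` by permutations. -/
def SymPow (X : Type*) (n : ℕ) : Type _ := Quotient (symSetoid X n)

/-- `X^{(n)}` carries the σ-algebra pushed forward along the quotient map
`F : (Fin n → X) → X^{(n)}`. -/
instance SymPow.instMeasurableSpace (X : Type*) [MeasurableSpace X] (n : ℕ) :
    MeasurableSpace (SymPow X n) :=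
  MeasurableSpace.map (Quotient.mk (symSetoid X n)) inferInstance


namespace SymPolarAux

variable {X : Type*} [MeasurableSpace X] {n : ℕ}

theorem funPolar_anti {W : Type*} [MeasurableSpace W] {S T : Set (W → ℝ≥0∞)}
    (h : S ⊆ T) : funPolar T ⊆ funPolar S :=
  fun _μ hμ => ⟨hμ.1, fun g hg => hμ.2 g (h hg)⟩

theorem measurable_symPow {β : Type*} [MeasurableSpace β] {g : SymPow X n → β}
    (h : Measurable (g ∘ Quotient.mk (symSetoid X n))) : Measurable g :=
  fun _t ht => h ht

theorem measurable_compPerm (σ : Equiv.Perm (Fin n)) :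
    Measurable fun x : Fin n → X => x ∘ σ :=
  measurable_pi_lambda _ (fun _i => measurable_pi_apply _)

theorem bary_symm (g : (Fin n → X) → ℝ≥0∞) (σ : Equiv.Perm (Fin n)) (x : Fin n → X) :
    bary n g (x ∘ σ) = bary n g x := by
  unfold bary
  congr 1
  simpa [Function.comp_assoc] using
    Equiv.sum_comp (Equiv.mulLeft σ) (fun τ : Equiv.Perm (Fin n) => g (x ∘ τ))

theorem bary_of_symm {h : (Fin n → X) → ℝ≥0∞}
    (hsym : ∀ (σ : Equiv.Perm (Fin n)) (x : Fin n → X), h (x ∘ σ) = h x)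
    (x : Fin n → X) : bary n h x = h x := by
  unfold bary
  rw [Finset.sum_congr rfl fun σ _ => hsym σ x, Finset.sum_const, Finset.card_univ,
    Fintype.card_perm, Fintype.card_fin, nsmul_eq_mul, ← mul_assoc,
    ENNReal.inv_mul_cancel (by exact_mod_cast n.factorial_ne_zero) (by simp), one_mul]

/-- The uniform measure on the orbit of `x`. -/
noncomputable def kerFun (x : Fin n → X) : Measure (Fin n → X) :=
  ((n.factorial : ℝ≥0∞)⁻¹) • ∑ σ : Equiv.Perm (Fin n), Measure.dirac (x ∘ σ)

theorem kerFun_comp (x : Fin n → X) (τ : Equiv.Perm (Fin n)) :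
    kerFun (x ∘ τ) = kerFun x := by
  unfold kerFun
  congr 1
  simpa [Function.comp_assoc] using
    Equiv.sum_comp (Equiv.mulLeft τ) (fun σ : Equiv.Perm (Fin n) => Measure.dirac (x ∘ σ))

/-- The "uniform measure on the fibre" kernel from the symmetric power. -/
noncomputable def ker : SymPow X n → Measure (Fin n → X) :=
  Quotient.lift kerFun (fun x _y hxy => by
    obtain ⟨τ, rfl⟩ := hxy
    exact (kerFun_comp x τ).symm)

theorem ker_mk (x : Fin n → X) : ker (Quotient.mk (symSetoid X n) x) = kerFun x := rfl

theorem lintegral_kerFun {f : (Fin n → X) → ℝ≥0∞} (hf : Measurable f) (x : Fin n → X) :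
    ∫⁻ y, f y ∂(kerFun x) = bary n f x := by
  unfold kerFun bary
  rw [lintegral_smul_measure, lintegral_finset_sum_measure]
  congr 1
  exact Finset.sum_congr rfl fun σ _ => lintegral_dirac' _ hf

theorem kerFun_univ (x : Fin n → X) : kerFun x Set.univ = 1 := by
  simp only [kerFun, Measure.smul_apply, Measure.finset_sum_apply, Measure.dirac_apply_of_mem
    (Set.mem_univ _), Finset.sum_const, Finset.card_univ, Fintype.card_perm, Fintype.card_fin,
    nsmul_eq_mul, mul_one, smul_eq_mul]
  exact ENNReal.inv_mul_cancel (by exact_mod_cast n.factorial_ne_zero) (by simp)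

theorem measurable_ker : Measurable (ker : SymPow X n → Measure (Fin n → X)) := by
  apply Measure.measurable_of_measurable_coe
  intro U hU
  apply measurable_symPow
  have hcomp : (fun w => ker w U) ∘ Quotient.mk (symSetoid X n)
      = fun x : Fin n → X =>
        (n.factorial : ℝ≥0∞)⁻¹ * ∑ σ : Equiv.Perm (Fin n), U.indicator 1 (x ∘ σ) := by
    funext x
    show kerFun x U = _
    simp [kerFun, Measure.smul_apply, Measure.finset_sum_apply, Measure.dirac_apply' _ hU,
      smul_eq_mul]
  rw [hcomp]
  refine Measurable.const_mul (Finset.measurable_sum _ fun σ _ => ?_) _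
  exact (measurable_one.indicator hU).comp (measurable_compPerm σ)

theorem measurable_tensor {F : Set (X → ℝ≥0∞)} (hF : ∀ f ∈ F, Measurable f)
    {f : Fin n → X → ℝ≥0∞} (hfF : ∀ i, f i ∈ F) :
    Measurable fun y : Fin n → X => ∏ i, f i (y i) :=
  Finset.measurable_prod _ fun i _ => (hF _ (hfF i)).comp (measurable_pi_apply i)

theorem bary_mem_biPolar {F : Set (X → ℝ≥0∞)} (hF : ∀ f ∈ F, Measurable f)
    {g : (Fin n → X) → ℝ≥0∞} (hg : g ∈ biPolar (tensorPow F n)) :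
    bary n g ∈ biPolar (tensorPow F n) := by
  obtain ⟨hgm, hgi⟩ := hg
  have hcm : ∀ σ : Equiv.Perm (Fin n), Measurable fun x : Fin n → X => g (x ∘ σ) :=
    fun σ => hgm.comp (measurable_compPerm σ)
  constructor
  · exact Measurable.const_mul (Finset.measurable_sum _ fun σ _ => hcm σ) _
  · rintro μ ⟨hμs, hμi⟩
    have key : ∀ σ : Equiv.Perm (Fin n), ∫⁻ x, g (x ∘ σ) ∂μ ≤ 1 := by
      intro σ
      rw [← lintegral_map hgm (measurable_compPerm σ)]
      refine hgi _ ⟨inferInstance, ?_⟩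
      rintro t ⟨f, hfF, rfl⟩
      rw [lintegral_map (measurable_tensor hF hfF) (measurable_compPerm σ)]
      have hre : (fun x : Fin n → X => ∏ i, f i ((x ∘ σ) i))
          = fun x : Fin n → X => ∏ j, f (σ.symm j) (x j) := by
        funext x
        rw [← Equiv.prod_comp σ (fun j => f (σ.symm j) (x j))]
        exact Finset.prod_congr rfl fun i _ => by simp
      rw [hre]
      exact hμi _ ⟨fun j => f (σ.symm j), fun j => hfF _, rfl⟩
    calc ∫⁻ x, bary n g x ∂μ
        = (n.factorial : ℝ≥0∞)⁻¹ * ∑ σ : Equiv.Perm (Fin n), ∫⁻ x, g (x ∘ σ) ∂μ := by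
          unfold bary
          rw [lintegral_const_mul _ (Finset.measurable_sum _ fun σ _ => hcm σ),
            lintegral_finset_sum _ fun σ _ => hcm σ]
      _ ≤ (n.factorial : ℝ≥0∞)⁻¹ * ∑ _σ : Equiv.Perm (Fin n), 1 := by
          gcongr with σ
          exact key σ
      _ = 1 := by
          rw [Finset.sum_const, Finset.card_univ, Fintype.card_perm, Fintype.card_fin,
            nsmul_eq_mul, mul_one]
          exact ENNReal.inv_mul_cancel (by exact_mod_cast n.factorial_ne_zero) (by simp)

theorem bind_mem_polar {F : Set (X → ℝ≥0∞)} (hF : ∀ f ∈ F, Measurable f)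
    {ν : Measure (SymPow X n)}
    (hν : ν ∈ funPolar {G : SymPow X n → ℝ≥0∞ | ∃ f : Fin n → X → ℝ≥0∞, (∀ i, f i ∈ F) ∧
          ∀ x : Fin n → X, G (Quotient.mk (symSetoid X n) x) =
            bary n (fun y => ∏ i, f i (y i)) x}) :
    ν.bind ker ∈ funPolar (tensorPow F n) := by
  obtain ⟨hs, hint⟩ := hν
  have hker_univ : ∀ w : SymPow X n, ker w Set.univ = 1 := by
    intro w
    induction w using Quotient.ind with
    | _ x => exact kerFun_univ x
  constructor
  · -- s-finiteness of the lifted measure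
    haveI hfin : ∀ k, IsFiniteMeasure ((sfiniteSeq ν k).bind ker) := by
      intro k
      constructor
      rw [Measure.bind_apply MeasurableSet.univ measurable_ker.aemeasurable]
      simp only [hker_univ, lintegral_one]
      exact measure_lt_top _ _
    have hrepr : ν.bind ker = Measure.sum fun k => (sfiniteSeq ν k).bind ker := by
      ext s hsm
      simp only [Measure.sum_apply _ hsm, Measure.bind_apply hsm measurable_ker.aemeasurable]
      rw [← lintegral_sum_measure, sum_sfiniteSeq]
    rw [hrepr]
    infer_instance
  · rintro t ⟨f, hfF, rfl⟩
    have ht := measurable_tensor (n := n) hF hfF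
    rw [Measure.lintegral_bind measurable_ker.aemeasurable ht.aemeasurable]
    refine hint _ ⟨f, hfF, fun x => ?_⟩
    exact lintegral_kerFun ht x

end SymPolarAux

/-- for `F = F°°`, the three generating sets of functions on the symmetric
power `X^{(n)}` — descents of symmetric members of `(F^{⊗n})°°`, descents of barycentres
of members of `(F^{⊗n})°°`, and descents of barycentres of pure tensors of members of `F`
— have the same double polar. -/

theorem biPolar_descent_generators_eq
    {X : Type*} [MeasurableSpace X] (n : ℕ) (F : Set (X → ℝ≥0∞))
    (hF : ∀ f ∈ F, Measurable f) (hFdd : biPolar F = F) :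
    biPolar {G : SymPow X n → ℝ≥0∞ | ∃ h, h ∈ biPolar (tensorPow F n) ∧
          (∀ (σ : Equiv.Perm (Fin n)) (x : Fin n → X), h (x ∘ σ) = h x) ∧
          ∀ x : Fin n → X, G (Quotient.mk (symSetoid X n) x) = h x} =
        biPolar {G : SymPow X n → ℝ≥0∞ | ∃ g, g ∈ biPolar (tensorPow F n) ∧
          ∀ x : Fin n → X, G (Quotient.mk (symSetoid X n) x) = bary n g x} ∧
      biPolar {G : SymPow X n → ℝ≥0∞ | ∃ g, g ∈ biPolar (tensorPow F n) ∧
          ∀ x : Fin n → X, G (Quotient.mk (symSetoid X n) x) = bary n g x} =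
        biPolar {G : SymPow X n → ℝ≥0∞ | ∃ f : Fin n → X → ℝ≥0∞, (∀ i, f i ∈ F) ∧
          ∀ x : Fin n → X, G (Quotient.mk (symSetoid X n) x) =
            bary n (fun y => ∏ i, f i (y i)) x} := by
  classical
  set A := {G : SymPow X n → ℝ≥0∞ | ∃ h, h ∈ biPolar (tensorPow F n) ∧
          (∀ (σ : Equiv.Perm (Fin n)) (x : Fin n → X), h (x ∘ σ) = h x) ∧
          ∀ x : Fin n → X, G (Quotient.mk (symSetoid X n) x) = h x} with hA
  set B := {G : SymPow X n → ℝ≥0∞ | ∃ g, g ∈ biPolar (tensorPow F n) ∧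
          ∀ x : Fin n → X, G (Quotient.mk (symSetoid X n) x) = bary n g x} with hB
  set C := {G : SymPow X n → ℝ≥0∞ | ∃ f : Fin n → X → ℝ≥0∞, (∀ i, f i ∈ F) ∧
          ∀ x : Fin n → X, G (Quotient.mk (symSetoid X n) x) =
            bary n (fun y => ∏ i, f i (y i)) x} with hC
  have hCB : C ⊆ B := by
    rintro G ⟨f, hfF, hG⟩
    refine ⟨fun y => ∏ i, f i (y i), ⟨SymPolarAux.measurable_tensor hF hfF, ?_⟩, hG⟩
    rintro μ ⟨hμs, hμi⟩
    exact hμi _ ⟨f, hfF, rfl⟩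
  have hBA : B ⊆ A := by
    rintro G ⟨g, hg, hG⟩
    exact ⟨bary n g, SymPolarAux.bary_mem_biPolar hF hg,
      fun σ x => SymPolarAux.bary_symm g σ x, hG⟩
  have hCA : funPolar C ⊆ funPolar A := by
    rintro ν hν
    refine ⟨hν.1, ?_⟩
    rintro G ⟨h, ⟨hm, hi⟩, hsym, hGh⟩
    have hμ := SymPolarAux.bind_mem_polar hF hν
    have hle := hi _ hμ
    rw [Measure.lintegral_bind SymPolarAux.measurable_ker.aemeasurable hm.aemeasurable] at hle
    calc ∫⁻ w, G w ∂ν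
        = ∫⁻ w, (∫⁻ y, h y ∂ SymPolarAux.ker w) ∂ν := by
          refine lintegral_congr fun w => ?_
          induction w using Quotient.ind with
          | _ x =>
            rw [SymPolarAux.ker_mk, SymPolarAux.lintegral_kerFun hm,
              SymPolarAux.bary_of_symm hsym, hGh]
      _ ≤ 1 := hle
  have hfA : funPolar A = funPolar C :=
    Set.Subset.antisymm (SymPolarAux.funPolar_anti (hCB.trans hBA)) hCA
  have hfB : funPolar B = funPolar C :=
    Set.Subset.antisymm (SymPolarAux.funPolar_anti hCB)
      (hCA.trans (SymPolarAux.funPolar_anti hBA))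
  refine ⟨?_, ?_⟩
  · show measPolar (funPolar A) = measPolar (funPolar B)
    rw [hfA, hfB]
  · show measPolar (funPolar B) = measPolar (funPolar C)
    rw [hfB]
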